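/- Let G be a semi-Markovian causal graph with observed variables V and let W ⊆ C ⊆ V be such that W is ancestral in G[C], i.e., no vertex of C∖W is an ancestor in G[C] of any vertex of W. Then for every SEM M ∈ 𝕄(G) and every v ∈ dom(V): Q^M[W](v) = Σ_{c′ ∈ dom(C∖W)} Q^M[C](v′), where v′ agrees with v outside C∖W and equals c′ on C∖W. -/

import Mathlib

open scoped Classical

/-- A semi-Markovian causal graph: a DAG over a finite vertex set partitioned into
observed (`obs`) and unobserved (`unobs`) variables, where every unobserved variable
has no parents and exactly two (distinct, observed) children. -/
structure CausalGraph (ν : Type) [Fintype ν] [DecidableEq ν] where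
  obs : Finset ν
  unobs : Finset ν
  disj : Disjoint obs unobs
  E : ν → ν → Prop
  edge_mem : ∀ x y, E x y → x ∈ obs ∪ unobs ∧ y ∈ obs ∪ unobs
  acyclic : ∀ x, ¬ Relation.TransGen E x x
  unobs_no_parent : ∀ u ∈ unobs, ∀ w, ¬ E w u
  unobs_two_children : ∀ u ∈ unobs,
    ∃ a b, a ≠ b ∧ a ∈ obs ∧ b ∈ obs ∧ (∀ w, E u w ↔ w = a ∨ w = b)

namespace CausalGraph

variable {ν : Type} [Fintype ν] [DecidableEq ν]

def verts (G : CausalGraph ν) : Finset ν := G.obs ∪ G.unobs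

/-- A structural equation model over the causal graph `G`: finite nonempty domains
(encoded as finite sets of naturals), a pmf for each unobserved variable, and a
conditional pmf (given an assignment to the parents) for each observed variable. -/
structure SEM (G : CausalGraph ν) where
  dom : ν → Finset ℕ
  dom_ne : ∀ x, (dom x).Nonempty
  pU : ν → ℕ → ℝ
  pU_nonneg : ∀ u n, 0 ≤ pU u n
  pU_sum : ∀ u ∈ G.unobs, ∑ n ∈ dom u, pU u n = 1
  pO : ν → ℕ → (ν → ℕ) → ℝ
  pO_nonneg : ∀ x n pa, 0 ≤ pO x n pa
  pO_sum : ∀ x ∈ G.obs, ∀ pa : ν → ℕ, ∑ n ∈ dom x, pO x n pa = 1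
  pO_par : ∀ x n (pa pa' : ν → ℕ), (∀ p, G.E p x → pa p = pa' p) → pO x n pa = pO x n pa'

namespace SEM

variable {G : CausalGraph ν}

/-- Full assignments: all variables of `G` get values in their domains
(non-vertices are pinned to `0`). -/
noncomputable def fullAssign (M : SEM G) : Finset (ν → ℕ) :=
  Fintype.piFinset (fun x => if x ∈ G.verts then M.dom x else {0})

/-- Observed assignments `dom(V)`: observed variables get values in their domains
(all other coordinates are pinned to `0`). -/
noncomputable def obsAssign (M : SEM G) : Finset (ν → ℕ) :=
  Fintype.piFinset (fun x => if x ∈ G.obs then M.dom x else {0})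

/-- `Q^M[S](v) = Σ_u Π_{X ∈ S} P(x | pa_G(X)) Π_{U} P(u)`. -/
noncomputable def Q (M : SEM G) (S : Finset ν) (v : ν → ℕ) : ℝ :=
  ∑ w ∈ M.fullAssign.filter (fun w => ∀ x ∈ G.obs, w x = v x),
    (∏ x ∈ S, M.pO x (w x) w) * ∏ u ∈ G.unobs, M.pU u (w u)

/-- The observational distribution `P^M(v) = Q^M[V](v)`. -/
noncomputable def P (M : SEM G) (v : ν → ℕ) : ℝ := M.Q G.obs v

/-- Post-interventional probability `P^M_x(y)`: sum of `Q^M[V∖X]` over all observed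
realizations consistent with `x` on `X` and `y` on `Y`. -/
noncomputable def Px (M : SEM G) (X : Finset ν) (x : ν → ℕ) (Y : Finset ν) (y : ν → ℕ) : ℝ :=
  ∑ v ∈ M.obsAssign.filter (fun v => (∀ i ∈ X, v i = x i) ∧ (∀ i ∈ Y, v i = y i)),
    M.Q (G.obs \ X) v

/-- `M ∈ 𝕄⁺(G)`: strictly positive observational distribution. -/
def positive (M : SEM G) : Prop := ∀ v ∈ M.obsAssign, 0 < M.P v

end SEM

/-- The causal effect of `X` on `Y` is identifiable from `G`. -/
def Identifiable (G : CausalGraph ν) (X Y : Finset ν) : Prop :=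
  ∀ M₁ M₂ : SEM G, M₁.positive → M₂.positive →
    (∀ i ∈ G.obs, M₁.dom i = M₂.dom i) →
    (∀ v ∈ M₁.obsAssign, M₁.P v = M₂.P v) →
    ∀ x y : ν → ℕ, (∀ i ∈ X, x i ∈ M₁.dom i) → (∀ i ∈ Y, y i ∈ M₁.dom i) →
      M₁.Px X x Y y = M₂.Px X x Y y

/-- `Q[S]` is identifiable from `G`. -/
def QIdentifiable (G : CausalGraph ν) (S : Finset ν) : Prop :=
  Identifiable G (G.obs \ S) S

/-- The causal effect of `X` on `Y` is g-identifiable from `(𝔸, G)`. -/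
def GIdentifiable (G : CausalGraph ν) (𝔸 : Finset (Finset ν)) (X Y : Finset ν) : Prop :=
  ∀ M₁ M₂ : SEM G, M₁.positive → M₂.positive →
    (∀ i ∈ G.obs, M₁.dom i = M₂.dom i) →
    (∀ A ∈ 𝔸, ∀ v ∈ M₁.obsAssign, M₁.Q A v = M₂.Q A v) →
    ∀ x y : ν → ℕ, (∀ i ∈ X, x i ∈ M₁.dom i) → (∀ i ∈ Y, y i ∈ M₁.dom i) →
      M₁.Px X x Y y = M₂.Px X x Y y

/-- `Q[S]` is g-identifiable from `(𝔸, G)`. -/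
def QGIdentifiable (G : CausalGraph ν) (𝔸 : Finset (Finset ν)) (S : Finset ν) : Prop :=
  GIdentifiable G 𝔸 (G.obs \ S) S

/-- Bidirected edge of `G_X` between `a` and `b`: distinct members of `X` sharing an
unobserved parent (whose two children then necessarily both lie in `X`). -/
def biEdge (G : CausalGraph ν) (X : Finset ν) (a b : ν) : Prop :=
  a ≠ b ∧ a ∈ X ∧ b ∈ X ∧ ∃ u ∈ G.unobs, G.E u a ∧ G.E u b

/-- `X` is a single c-component of `G`. -/
def SingleC (G : CausalGraph ν) (X : Finset ν) : Prop :=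
  X.Nonempty ∧ ∀ a ∈ X, ∀ b ∈ X, Relation.ReflTransGen (G.biEdge X) a b

/-- The c-components of `S`: connected components of the bidirected part of `G_S`. -/
noncomputable def cComponents (G : CausalGraph ν) (S : Finset ν) : Finset (Finset ν) :=
  S.image (fun a => S.filter (fun b => Relation.ReflTransGen (G.biEdge S) a b))

/-- Directed edge of `G_X` (both endpoints in `X`). -/
def dirEdgeIn (G : CausalGraph ν) (X : Finset ν) (a b : ν) : Prop :=
  a ∈ X ∧ b ∈ X ∧ G.E a b

/-- `Anc_Y(G_X)`: members of `X` having a directed path in `G_X` to some member of `Y`. -/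
noncomputable def ancIn (G : CausalGraph ν) (X Y : Finset ν) : Finset ν :=
  X.filter (fun a => ∃ y ∈ Y, Relation.ReflTransGen (G.dirEdgeIn X) a y)

/-- Unobserved vertices of the induced subgraph `G[A]`: unobserved vertices of `G`
both of whose children lie in `A`. -/
noncomputable def inducedUnobs (G : CausalGraph ν) (A : Finset ν) : Finset ν :=
  G.unobs.filter (fun u => ∀ w, G.E u w → w ∈ A)

/-- The induced subgraph `G[A]`. -/
noncomputable def induced (G : CausalGraph ν) (A : Finset ν) : CausalGraph ν where
  obs := A ∩ G.obs
  unobs := G.inducedUnobs A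
  disj := G.disj.mono Finset.inter_subset_right (Finset.filter_subset _ _)
  E x y := G.E x y ∧ x ∈ (A ∩ G.obs) ∪ G.inducedUnobs A ∧ y ∈ (A ∩ G.obs) ∪ G.inducedUnobs A
  edge_mem := fun x y h => ⟨h.2.1, h.2.2⟩
  acyclic := fun x h => G.acyclic x (by
    have key : ∀ a b, Relation.TransGen (fun x y => G.E x y ∧ x ∈ (A ∩ G.obs) ∪ G.inducedUnobs A ∧
        y ∈ (A ∩ G.obs) ∪ G.inducedUnobs A) a b → Relation.TransGen G.E a b := by
      intro a b hab'
      induction hab' with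
      | single hab => exact Relation.TransGen.single hab.1
      | tail _ hab ih => exact Relation.TransGen.tail ih hab.1
    exact key x x h)
  unobs_no_parent := fun u hu w hw =>
    G.unobs_no_parent u (Finset.mem_filter.mp hu).1 w hw.1
  unobs_two_children := by
    intro u hu
    have hu' := Finset.mem_filter.mp hu
    obtain ⟨a, b, hab, ha, hb, hiff⟩ := G.unobs_two_children u hu'.1
    have hEa : G.E u a := (hiff a).mpr (Or.inl rfl)
    have hEb : G.E u b := (hiff b).mpr (Or.inr rfl)
    have haA : a ∈ A := hu'.2 a hEa
    have hbA : b ∈ A := hu'.2 b hEb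
    refine ⟨a, b, hab, Finset.mem_inter.mpr ⟨haA, ha⟩, Finset.mem_inter.mpr ⟨hbA, hb⟩, ?_⟩
    intro w
    constructor
    · intro hw; exact (hiff w).mp hw.1
    · rintro (rfl | rfl)
      · exact ⟨hEa, Finset.mem_union.mpr (Or.inr hu),
          Finset.mem_union.mpr (Or.inl (Finset.mem_inter.mpr ⟨haA, ha⟩))⟩
      · exact ⟨hEb, Finset.mem_union.mpr (Or.inr hu),
          Finset.mem_union.mpr (Or.inl (Finset.mem_inter.mpr ⟨hbA, hb⟩))⟩

/-- `H` is a subgraph of `G`. -/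
def IsSubgraph (H G : CausalGraph ν) : Prop :=
  H.obs ⊆ G.obs ∧ H.unobs ⊆ G.unobs ∧ ∀ a b, H.E a b → G.E a b

/-- `H` is an `R`-rooted c-forest: `R` is the root set of `H`, the observed vertex set of
`H` is a single c-component, and every observed vertex has at most one child in `H`. -/
def IsCForest (H : CausalGraph ν) (R : Finset ν) : Prop :=
  H.obs.filter (fun x => ∀ w, ¬ H.E x w) = R ∧
  H.SingleC H.obs ∧
  ∀ x ∈ H.obs, ∀ w w', H.E x w → H.E x w' → w = w'

end CausalGraph


section
variable {ν : Type} [Fintype ν] [DecidableEq ν]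

lemma CG_sum_out
    (t : ν → Finset ℕ) (c : ν) (a : ℕ) (f : (ν → ℕ) → ℝ) :
    ∑ w ∈ Fintype.piFinset t, f w =
      ∑ w ∈ Fintype.piFinset (Function.update t c {a}), ∑ n ∈ t c, f (Function.update w c n) := by
  rw [← Finset.sum_product']
  refine Finset.sum_nbij' (fun w => (Function.update w c a, w c))
    (fun p => Function.update p.1 c p.2) ?_ ?_ ?_ ?_ ?_
  · intro w hw
    rw [Fintype.mem_piFinset] at hw
    refine Finset.mk_mem_product ?_ (hw c)
    rw [Fintype.mem_piFinset]
    intro x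
    rcases eq_or_ne x c with rfl | hx
    · simp
    · simp [Function.update_of_ne hx, hw x]
  · rintro ⟨w, n⟩ hp
    rw [Finset.mem_product] at hp
    rw [Fintype.mem_piFinset] at hp ⊢
    intro x
    rcases eq_or_ne x c with rfl | hx
    · simpa using hp.2
    · have := hp.1 x
      simpa [Function.update_of_ne hx] using this
  · intro w hw
    simp [Function.update_idem, Function.update_eq_self]
  · rintro ⟨w, n⟩ hp
    rw [Finset.mem_product, Fintype.mem_piFinset] at hp
    have : w c = a := by have := hp.1 c; simpa using this
    simp [Function.update_idem, ← this, Function.update_eq_self]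
  · intro w hw
    simp [Function.update_idem, Function.update_eq_self]

omit [DecidableEq ν] in
lemma CG_exists_maximal
    (E : ν → ν → Prop) (hA : ∀ x, ¬ Relation.TransGen E x x)
    (D : Finset ν) (hD : D.Nonempty) :
    ∃ c ∈ D, ∀ d ∈ D, ¬ E c d := by
  have hwf : WellFounded (fun a b => Relation.TransGen E b a) := by
    have : IsIrrefl ν (fun a b => Relation.TransGen E b a) := ⟨fun x h => hA x h⟩
    have : IsTrans ν (fun a b => Relation.TransGen E b a) := ⟨fun a b c h1 h2 => h2.trans h1⟩
    exact Finite.wellFounded_of_trans_of_irrefl _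
  obtain ⟨c, hc, hmin⟩ := hwf.has_min D hD
  exact ⟨c, hc, fun d hd hE => hmin d hd (Relation.TransGen.single hE)⟩

end
open CausalGraph in
lemma Q_eq_sum_piFinset {ν : Type} [Fintype ν] [DecidableEq ν] {G : CausalGraph ν}
    (M : SEM G) (S : Finset ν) (v : ν → ℕ) (hv : v ∈ M.obsAssign) :
    M.Q S v = ∑ w ∈ Fintype.piFinset (fun x => if x ∈ G.unobs then M.dom x else {v x}),
      (∏ x ∈ S, M.pO x (w x) w) * ∏ u ∈ G.unobs, M.pU u (w u) := by
  rw [SEM.Q]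
  congr 1
  ext w
  rw [Finset.mem_filter, SEM.fullAssign, Fintype.mem_piFinset, Fintype.mem_piFinset]
  rw [SEM.obsAssign, Fintype.mem_piFinset] at hv
  constructor
  · rintro ⟨h1, h2⟩ x
    by_cases hu : x ∈ G.unobs
    · simpa [hu] using (by simpa [CausalGraph.verts, hu] using h1 x)
    · by_cases ho : x ∈ G.obs
      · simp [hu, h2 x ho]
      · have := h1 x
        have hvx : v x = 0 := by simpa [ho] using hv x
        simp only [CausalGraph.verts, Finset.mem_union, ho, hu, or_self, if_false] at this
        simp [hu, hvx]
        simpa using this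
  · intro h
    constructor
    · intro x
      by_cases hu : x ∈ G.unobs
      · simpa [CausalGraph.verts, hu] using (by simpa [hu] using h x)
      · by_cases ho : x ∈ G.obs
        · have hwx : w x = v x := by simpa [hu] using h x
          have : v x ∈ M.dom x := by simpa [ho] using hv x
          simp [CausalGraph.verts, ho, hwx, this]
        · have hvx : v x = 0 := by simpa [ho] using hv x
          have hwx : w x = v x := by simpa [hu] using h x
          simp [CausalGraph.verts, ho, hu, hwx, hvx]
    · intro x hx
      have hu : x ∉ G.unobs := Finset.disjoint_left.mp G.disj hx
      simpa [hu] using h x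
open CausalGraph in
lemma marg_aux {ν : Type} [Fintype ν] [DecidableEq ν] {G : CausalGraph ν} (M : SEM G)
    (W C : Finset ν) (hWC : W ⊆ C) (hCV : C ⊆ G.obs)
    (hanc : ∀ c ∈ C \ W, ∀ w ∈ W, ¬ Relation.ReflTransGen (G.dirEdgeIn C) c w)
    (v : ν → ℕ) :
    ∀ D : Finset ν, D ⊆ C \ W →
    ∑ w ∈ Fintype.piFinset (fun x => if x ∈ D ∪ G.unobs then M.dom x else {v x}),
      (∏ x ∈ W ∪ D, M.pO x (w x) w) * ∏ u ∈ G.unobs, M.pU u (w u)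
    = ∑ w ∈ Fintype.piFinset (fun x => if x ∈ G.unobs then M.dom x else {v x}),
      (∏ x ∈ W, M.pO x (w x) w) * ∏ u ∈ G.unobs, M.pU u (w u) := by
  intro D
  induction D using Finset.strongInduction with
  | _ D ih =>
    intro hD
    rcases D.eq_empty_or_nonempty with rfl | hne
    · simp
    obtain ⟨c, hcD, hcmax⟩ := CG_exists_maximal G.E G.acyclic D hne
    have hcCW : c ∈ C \ W := hD hcD
    have hcC : c ∈ C := (Finset.mem_sdiff.mp hcCW).1
    have hcW : c ∉ W := (Finset.mem_sdiff.mp hcCW).2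
    have hcobs : c ∈ G.obs := hCV hcC
    have hcu : c ∉ G.unobs := Finset.disjoint_left.mp G.disj hcobs
    set D' := D.erase c with hD'
    have hnochild : ∀ d ∈ W ∪ D, ¬ G.E c d := by
      intro d hd hE
      rcases Finset.mem_union.mp hd with hdW | hdD
      · exact hanc c hcCW d hdW (Relation.ReflTransGen.single ⟨hcC, hWC hdW, hE⟩)
      · exact hcmax d hdD hE
    have hnoself : ¬ G.E c c := fun h => G.acyclic c (Relation.TransGen.single h)
    have hupd : Function.update (fun x => if x ∈ D ∪ G.unobs then M.dom x else {v x}) c {v c}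
        = (fun x => if x ∈ D' ∪ G.unobs then M.dom x else {v x}) := by
      funext x
      rcases eq_or_ne x c with rfl | hx
      · simp [hcu, hD']
      · rw [Function.update_of_ne hx]
        by_cases hxm : x ∈ D ∪ G.unobs
        · rw [if_pos hxm, if_pos (by simpa [hD', Finset.mem_erase, hx] using hxm)]
        · rw [if_neg hxm, if_neg (by simpa [hD', Finset.mem_erase, hx] using hxm)]
    have htc : (if c ∈ D ∪ G.unobs then M.dom c else {v c}) = M.dom c := by simp [hcD]
    rw [CG_sum_out (fun x => if x ∈ D ∪ G.unobs then M.dom x else {v x}) c (v c)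
      (fun w => (∏ x ∈ W ∪ D, M.pO x (w x) w) * ∏ u ∈ G.unobs, M.pU u (w u)), hupd, htc]
    have hWD : W ∪ D = insert c (W ∪ D') := by
      conv_lhs => rw [← Finset.insert_erase hcD]
      rw [Finset.union_insert]
    have hcWD' : c ∉ W ∪ D' := by simp [hcW, hD']
    have key : ∀ w : ν → ℕ,
        (∑ n ∈ M.dom c, (∏ x ∈ W ∪ D, M.pO x (Function.update w c n x) (Function.update w c n))
          * ∏ u ∈ G.unobs, M.pU u (Function.update w c n u))
        = (∑ n ∈ M.dom c, M.pO c n w) *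
          ((∏ x ∈ W ∪ D', M.pO x (w x) w) * ∏ u ∈ G.unobs, M.pU u (w u)) := by
      intro w
      rw [Finset.sum_mul]
      refine Finset.sum_congr rfl (fun n _ => ?_)
      have h1 : ∏ x ∈ W ∪ D, M.pO x (Function.update w c n x) (Function.update w c n)
          = M.pO c n w * ∏ x ∈ W ∪ D', M.pO x (w x) w := by
        rw [hWD, Finset.prod_insert hcWD', Function.update_self]
        congr 1
        · exact M.pO_par c n _ w (fun p hp => Function.update_of_ne
            (fun (h : p = c) => hnoself (h ▸ hp)) _ _)
        · refine Finset.prod_congr rfl (fun x hx => ?_)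
          have hxc : x ≠ c := fun h => hcWD' (h ▸ hx)
          rw [Function.update_of_ne hxc]
          refine M.pO_par x (w x) _ w (fun p hp => Function.update_of_ne ?_ _ _)
          intro h
          subst h
          exact hnochild x (hWD ▸ Finset.mem_insert_of_mem hx) hp
      have h2 : ∏ u ∈ G.unobs, M.pU u (Function.update w c n u)
          = ∏ u ∈ G.unobs, M.pU u (w u) := by
        refine Finset.prod_congr rfl (fun u hu => ?_)
        rw [Function.update_of_ne (fun (h : u = c) => hcu (h ▸ hu))]
      rw [h1, h2]
      ring
    calc ∑ w ∈ Fintype.piFinset (fun x => if x ∈ D' ∪ G.unobs then M.dom x else {v x}),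
          ∑ n ∈ M.dom c, (∏ x ∈ W ∪ D, M.pO x (Function.update w c n x) (Function.update w c n))
            * ∏ u ∈ G.unobs, M.pU u (Function.update w c n u)
        = ∑ w ∈ Fintype.piFinset (fun x => if x ∈ D' ∪ G.unobs then M.dom x else {v x}),
          (∏ x ∈ W ∪ D', M.pO x (w x) w) * ∏ u ∈ G.unobs, M.pU u (w u) := by
          refine Finset.sum_congr rfl (fun w _ => ?_)
          rw [key w, M.pO_sum c hcobs w, one_mul]
      _ = _ := ih D' (Finset.erase_ssubset hcD) ((Finset.erase_subset _ _).trans hD)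

/-- Lemma 7, Tian–Pearl. If `W ⊆ C ⊆ V` and `W` is ancestral in
`G[C]`, then `Q[W]` is obtained from `Q[C]` by marginalizing over `C ∖ W`. -/
theorem Q_marginalize_ancestral
    {ν : Type} [Fintype ν] [DecidableEq ν] (G : CausalGraph ν)
    (W C : Finset ν) (hWC : W ⊆ C) (hCV : C ⊆ G.obs)
    (hanc : ∀ c ∈ C \ W, ∀ w ∈ W, ¬ Relation.ReflTransGen (G.dirEdgeIn C) c w)
    (M : CausalGraph.SEM G) (v : ν → ℕ) (hv : v ∈ M.obsAssign) :
    M.Q W v =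
      ∑ c' ∈ Fintype.piFinset (fun x => if x ∈ C \ W then M.dom x else ({0} : Finset ℕ)),
        M.Q C (fun x => if x ∈ C \ W then c' x else v x) := by
    classical
    have hv' : ∀ x, v x ∈ (if x ∈ G.obs then M.dom x else ({0} : Finset ℕ)) := by
      rwa [CausalGraph.SEM.obsAssign, Fintype.mem_piFinset] at hv
    have hCWobs : C \ W ⊆ G.obs := (Finset.sdiff_subset).trans hCV
    rw [Q_eq_sum_piFinset M W v hv]
    have hRHS : ∀ c' ∈ Fintype.piFinset (fun x => if x ∈ C \ W then M.dom x else ({0} : Finset ℕ)),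
        M.Q C (fun x => if x ∈ C \ W then c' x else v x)
        = ∑ w ∈ (Fintype.piFinset (fun x => if x ∈ (C \ W) ∪ G.unobs then M.dom x else {v x})).filter
            (fun w => (fun x => if x ∈ C \ W then w x else 0) = c'),
          (∏ x ∈ C, M.pO x (w x) w) * ∏ u ∈ G.unobs, M.pU u (w u) := by
      intro c' hc'
      rw [Fintype.mem_piFinset] at hc'
      have hvc' : (fun x => if x ∈ C \ W then c' x else v x) ∈ M.obsAssign := by
        rw [CausalGraph.SEM.obsAssign, Fintype.mem_piFinset]
        intro x
        by_cases ho : x ∈ G.obs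
        · by_cases hcw : x ∈ C \ W
          · simpa [ho, hcw] using hc' x
          · simpa [ho, hcw] using hv' x
        · have hcw : x ∉ C \ W := fun h => ho (hCWobs h)
          simpa [ho, hcw] using hv' x
      rw [Q_eq_sum_piFinset M C _ hvc']
      congr 1
      ext w
      rw [Fintype.mem_piFinset, Finset.mem_filter, Fintype.mem_piFinset]
      constructor
      · intro h
        refine ⟨fun x => ?_, funext fun x => ?_⟩
        · by_cases hu : x ∈ G.unobs
          · simpa [hu] using h x
          · by_cases hcw : x ∈ C \ W
            · have : w x = c' x := by simpa [hu, hcw] using h x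
              simp [hu, hcw, this, (by simpa [hcw] using hc' x : c' x ∈ M.dom x)]
            · simpa [hu, hcw] using h x
        · by_cases hcw : x ∈ C \ W
          · simpa [hcw, Finset.disjoint_left.mp G.disj (hCWobs hcw)] using h x
          · have : c' x = 0 := by simpa [hcw] using hc' x
            simp [hcw, this]
      · rintro ⟨h1, h2⟩ x
        have h2x := congrFun h2 x
        by_cases hu : x ∈ G.unobs
        · simpa [hu] using h1 x
        · by_cases hcw : x ∈ C \ W
          · simp only [hcw, if_pos] at h2x
            simp [hu, hcw, h2x]
          · simpa [hu, hcw] using h1 x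
    rw [Finset.sum_congr rfl hRHS]
    have hmaps : ∀ w ∈ Fintype.piFinset (fun x => if x ∈ (C \ W) ∪ G.unobs then M.dom x else {v x}),
        (fun x => if x ∈ C \ W then w x else 0)
          ∈ Fintype.piFinset (fun x => if x ∈ C \ W then M.dom x else ({0} : Finset ℕ)) := by
      intro w hw
      rw [Fintype.mem_piFinset] at hw ⊢
      intro x
      by_cases hcw : x ∈ C \ W
      · simpa [hcw] using hw x
      · simp [hcw]
    rw [Finset.sum_fiberwise_of_maps_to hmaps]
    have hmain := marg_aux M W C hWC hCV hanc v (C \ W) le_rfl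
    rw [Finset.union_sdiff_of_subset hWC] at hmain
    exact hmain.symm
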